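/- arXiv:1712.08230 — 3 statements merged into one kernel-verified Lean document; each statement's English description precedes it below -/
import Mathlib

section
/- Let K, t, q be positive integers with t ≤ K and q ≤ K, let S be a set of K elements, and let Q ⊆ S with |Q| = q. Then K · |{𝒯 ⊆ S : |𝒯| = t and 𝒯 ∩ Q ≠ ∅}| ≥ q · binomial(K, t). -/
lemma choose_step (m t : ℕ) (ht : 0 < t) :
    (m + 1) * Nat.choose m t ≤ m * Nat.choose (m + 1) t := by
  have h := Nat.choose_mul_succ_eq m t
  calc (m + 1) * Nat.choose m t = Nat.choose m t * (m + 1) := by ring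
    _ = Nat.choose (m + 1) t * (m + 1 - t) := h
    _ ≤ Nat.choose (m + 1) t * m := Nat.mul_le_mul_left _ (by omega)
    _ = m * Nat.choose (m + 1) t := by ring

lemma choose_ratio (t : ℕ) (ht : 0 < t) :
    ∀ m n : ℕ, m ≤ n → n * Nat.choose m t ≤ m * Nat.choose n t := by
  intro m n
  induction n with
  | zero => intro h; omega
  | succ n ih =>
    intro h
    rcases Nat.lt_or_ge m (n + 1) with hlt | hge
    · have hmn : m ≤ n := by omega
      have h1 := ih hmn
      rcases Nat.eq_zero_or_pos n with rfl | hn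
      · have : m = 0 := by omega
        subst this
        simp [Nat.choose_eq_zero_of_lt ht]
      · have h2 := choose_step n t ht
        have key : n * ((n + 1) * Nat.choose m t) ≤ n * (m * Nat.choose (n + 1) t) := by
          calc n * ((n + 1) * Nat.choose m t)
              = (n + 1) * (n * Nat.choose m t) := by ring
            _ ≤ (n + 1) * (m * Nat.choose n t) := Nat.mul_le_mul_left _ h1
            _ = m * ((n + 1) * Nat.choose n t) := by ring
            _ ≤ m * (n * Nat.choose (n + 1) t) := Nat.mul_le_mul_left _ h2
            _ = n * (m * Nat.choose (n + 1) t) := by ring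
        exact Nat.le_of_mul_le_mul_left key hn
    · have : m = n + 1 := by omega
      subst this
      exact le_refl _

/-- Any `q` servers collectively store at least a fraction `q/K` of all
`binom(K, t)` batches: `K · |{𝒯 : |𝒯| = t, 𝒯 ∩ Q ≠ ∅}| ≥ q · binom(K, t)`. -/
theorem intersecting_batches_fraction
    (K t q : ℕ) (hK : 0 < K) (ht : 0 < t) (hq : 0 < q)
    (htK : t ≤ K) (hqK : q ≤ K)
    (Q : Finset (Fin K)) (hQ : Q.card = q) :
    q * K.choose t ≤
      K * ((Finset.powersetCard t (Finset.univ : Finset (Fin K))).filter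
        (fun 𝒯 => (𝒯 ∩ Q).Nonempty)).card := by
  classical
  set P := Finset.powersetCard t (Finset.univ : Finset (Fin K)) with hP
  have hcompl : P.filter (fun 𝒯 => ¬(𝒯 ∩ Q).Nonempty) = Finset.powersetCard t Qᶜ := by
    ext T
    simp only [Finset.mem_filter, Finset.mem_powersetCard, Finset.not_nonempty_iff_eq_empty,
      ← Finset.disjoint_iff_inter_eq_empty, hP, Finset.subset_univ, true_and,
      ← Finset.le_eq_subset, le_compl_iff_disjoint_right]
    tauto
  have hcomplcard : (P.filter (fun 𝒯 => ¬(𝒯 ∩ Q).Nonempty)).card = (K - q).choose t := by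
    rw [hcompl, Finset.card_powersetCard, Finset.card_compl, hQ, Fintype.card_fin]
  have hPcard : P.card = K.choose t := by
    rw [hP, Finset.card_powersetCard, Finset.card_univ, Fintype.card_fin]
  have hsplit := Finset.card_filter_add_card_filter_not
    (s := P) (p := fun 𝒯 => (𝒯 ∩ Q).Nonempty)
  set a := (P.filter (fun 𝒯 => (𝒯 ∩ Q).Nonempty)).card with ha
  have hab : a + (K - q).choose t = K.choose t := by
    rw [← hcomplcard, ← hPcard]; exact hsplit
  have hratio : K * (K - q).choose t ≤ (K - q) * K.choose t :=
    choose_ratio t ht (K - q) K (by omega)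
  nlinarith [hab, hratio, Nat.sub_add_cancel hqK]
end

section
/- Let r, B, T be positive integers with B dividing r and T dividing r. Set Y := ⌊r/(B·T)⌋ and d := r/B − Y·T. Define the B×T nonnegative integer matrix P by p_{i,j} = Y + |{a ∈ ℕ : a < d·B, ⌊a/d⌋ + 1 = i, (a mod T) + 1 = j}| for 1 ≤ i ≤ B and 1 ≤ j ≤ T (the counting set being empty when d = 0). Then every row of P sums to r/B and every column of P sums to r/T; that is, P is a valid assignment matrix. -/
/-- Summing fiber cardinalities over all fiber values gives the total count. -/
lemma sum_card_fiber (s t : Finset ℕ) (p : ℕ → Prop) [DecidablePred p]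
    (g : ℕ → ℕ) (hg : ∀ a ∈ s, p a → g a ∈ t) :
    ∑ j ∈ t, ((s.filter (fun a => p a ∧ g a = j)).card) = (s.filter p).card := by
  simp_rw [Finset.card_filter]
  rw [Finset.sum_comm]
  apply Finset.sum_congr rfl
  intro a ha
  by_cases hpa : p a
  · simp [hpa, Finset.sum_ite_eq, hg a ha hpa]
  · simp [hpa]

lemma divcount (d B i : ℕ) (hi1 : 1 ≤ i) (hi2 : i ≤ B) :
    ((Finset.range (d * B)).filter (fun a => a / d + 1 = i)).card = d := by
  rcases Nat.eq_zero_or_pos d with rfl | hd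
  · simp
  have : (Finset.range (d * B)).filter (fun a => a / d + 1 = i)
      = Finset.Ico ((i - 1) * d) ((i - 1) * d + d) := by
    ext a
    simp only [Finset.mem_filter, Finset.mem_range, Finset.mem_Ico]
    constructor
    · rintro ⟨h1, h2⟩
      have hm : a / d = i - 1 := by omega
      have h3 := Nat.div_add_mod a d
      have h4 := Nat.mod_lt a hd
      rw [hm] at h3
      have h5 : (i - 1) * d = d * (i - 1) := Nat.mul_comm _ _
      omega
    · rintro ⟨h1, h2⟩
      have hm : a / d = i - 1 :=
        Nat.div_eq_of_lt_le h1 (by rw [Nat.succ_mul]; omega)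
      refine ⟨?_, by omega⟩
      calc a < (i - 1) * d + d := h2
        _ = ((i - 1) + 1) * d := by ring
        _ ≤ B * d := Nat.mul_le_mul_right d (by omega)
        _ = d * B := Nat.mul_comm B d
  rw [this, Nat.card_Ico]
  omega

lemma modcount (T k j : ℕ) (hj1 : 1 ≤ j) (hj2 : j ≤ T) :
    ((Finset.range (T * k)).filter (fun a => a % T + 1 = j)).card = k := by
  have hT : 0 < T := by omega
  have : (Finset.range (T * k)).filter (fun a => a % T + 1 = j)
      = (Finset.range k).image (fun q => q * T + (j - 1)) := by
    ext a
    simp only [Finset.mem_filter, Finset.mem_range, Finset.mem_image]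
    constructor
    · rintro ⟨h1, h2⟩
      refine ⟨a / T, Nat.div_lt_of_lt_mul h1, ?_⟩
      have h3 := Nat.div_add_mod a T
      have h4 : a / T * T = T * (a / T) := Nat.mul_comm _ _
      omega
    · rintro ⟨q, hq, rfl⟩
      refine ⟨?_, ?_⟩
      · calc q * T + (j - 1) < q * T + T := by omega
          _ = (q + 1) * T := by ring
          _ ≤ k * T := Nat.mul_le_mul_right T (by omega)
          _ = T * k := Nat.mul_comm k T
      · rw [Nat.mul_comm q T, Nat.mul_add_mod, Nat.mod_eq_of_lt (by omega)]
        omega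
  rw [this, Finset.card_image_of_injective _ (fun a b hab => by
      exact Nat.eq_of_mul_eq_mul_right hT (by omega : a * T = b * T)),
    Finset.card_range]

/-- The matrix produced by the heuristic assignment solver (Algorithm 1) is a
valid assignment matrix: every row sums to the batch size `r/B` and every
column sums to `r/T`. Entry `(i, j)` (with `1 ≤ i ≤ B`, `1 ≤ j ≤ T`) equals
`Y + |{a < d·B : ⌊a/d⌋ + 1 = i ∧ (a mod T) + 1 = j}|` where `Y = ⌊r/(B·T)⌋`
and `d = r/B − Y·T`. -/
theorem heuristic_solver_valid_assignment
    (r B T : ℕ) (hr : 0 < r) (hB : 0 < B) (hT : 0 < T)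
    (hBr : B ∣ r) (hTr : T ∣ r)
    (Y d : ℕ) (hY : Y = r / (B * T)) (hd : d = r / B - Y * T)
    (P : ℕ → ℕ → ℕ)
    (hP : ∀ i ∈ Finset.Icc 1 B, ∀ j ∈ Finset.Icc 1 T,
      P i j = Y + ((Finset.range (d * B)).filter
        (fun a => a / d + 1 = i ∧ a % T + 1 = j)).card) :
    (∀ i ∈ Finset.Icc 1 B, ∑ j ∈ Finset.Icc 1 T, P i j = r / B) ∧
    (∀ j ∈ Finset.Icc 1 T, ∑ i ∈ Finset.Icc 1 B, P i j = r / T) := by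
  set q := r / B with hq
  have hrq : B * q = r := Nat.mul_div_cancel' hBr
  have hYq : Y = q / T := by rw [hY, hq, ← Nat.div_div_eq_div_mul]
  have hdm := Nat.div_add_mod q T
  have hcomm : q / T * T = T * (q / T) := Nat.mul_comm _ _
  have hdq : d = q % T := by rw [hd, hYq]; omega
  have hdT : d < T := hdq ▸ Nat.mod_lt q hT
  have hqd : q = Y * T + d := by rw [hYq, hdq]; omega
  have hTdB : T ∣ d * B := by
    have h1 : B * Y * T + d * B = r := by rw [← hrq, hqd]; ring
    have h2 : T ∣ B * Y * T := ⟨B * Y, by ring⟩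
    have h3 : T ∣ B * Y * T + d * B := h1 ▸ hTr
    exact (Nat.dvd_add_right h2).mp h3
  set k := d * B / T with hk
  have hkT : T * k = d * B := Nat.mul_div_cancel' hTdB
  have hrT : r / T = B * Y + k := by
    have h : r = T * (B * Y + k) := by rw [← hrq, hqd, Nat.mul_add T, hkT]; ring
    rw [h, Nat.mul_div_cancel_left _ hT]
  constructor
  · intro i hi
    simp only [Finset.mem_Icc] at hi
    rw [Finset.sum_congr rfl (fun j hj => hP i (Finset.mem_Icc.mpr hi) j hj),
      Finset.sum_add_distrib, Finset.sum_const, Nat.card_Icc]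
    have hg : ∀ a ∈ Finset.range (d * B), (a / d + 1 = i) → a % T + 1 ∈ Finset.Icc 1 T := by
      intro a _ _
      have := Nat.mod_lt a hT
      exact Finset.mem_Icc.mpr ⟨by omega, by omega⟩
    rw [sum_card_fiber (Finset.range (d * B)) (Finset.Icc 1 T)
        (fun a => a / d + 1 = i) (fun a => a % T + 1) hg,
      divcount d B i hi.1 hi.2, smul_eq_mul]
    have h5 : (T + 1 - 1) * Y = Y * T := by rw [Nat.add_sub_cancel, Nat.mul_comm]
    omega
  · intro j hj
    simp only [Finset.mem_Icc] at hj
    rw [Finset.sum_congr rfl (fun i hi => hP i hi j (Finset.mem_Icc.mpr hj)),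
      Finset.sum_add_distrib, Finset.sum_const, Nat.card_Icc]
    have hswap : ∀ i ∈ Finset.Icc 1 B,
        ((Finset.range (d * B)).filter (fun a => a / d + 1 = i ∧ a % T + 1 = j)).card
        = ((Finset.range (d * B)).filter (fun a => a % T + 1 = j ∧ a / d + 1 = i)).card := by
      intro i _
      congr 1
      apply Finset.filter_congr
      intro a _
      simp [and_comm]
    rw [Finset.sum_congr rfl hswap]
    have hg : ∀ a ∈ Finset.range (d * B), (a % T + 1 = j) → a / d + 1 ∈ Finset.Icc 1 B := by
      intro a ha _
      rw [Finset.mem_range] at ha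
      have hd0 : 0 < d := by
        rcases Nat.eq_zero_or_pos d with h | h
        · rw [h, Nat.zero_mul] at ha; omega
        · exact h
      have hlt : a / d < B := (Nat.div_lt_iff_lt_mul hd0).mpr (by rw [Nat.mul_comm B d]; exact ha)
      exact Finset.mem_Icc.mpr ⟨Nat.succ_le_succ (Nat.zero_le _), by omega⟩
    rw [sum_card_fiber (Finset.range (d * B)) (Finset.Icc 1 B)
        (fun a => a % T + 1 = j) (fun a => a / d + 1) hg,
      ← hkT, modcount T k j hj.1 hj.2, smul_eq_mul]
    have h5 : (B + 1 - 1) * Y = B * Y := by rw [Nat.add_sub_cancel]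
    omega
end

section
/- Let K, t, q, m, r, T be positive integers with t ≤ q ≤ K, q·r = K·m, B := binomial(K, t) dividing r, T dividing m, and T dividing r/B. Set c := (r/B)/T and let P be the constant assignment matrix with every entry equal to c. Then: (i) for every q-element subset Q of a fixed K-element set S and every partition j ∈ {1, …, T}, Σ_{𝒯 : 𝒯 ∩ Q ≠ ∅} P(𝒯, j) ≥ m/T, where 𝒯 ranges over t-element subsets of S; and (ii) for every collection I of batches, Σ_{j=1}^{T} max(m/T − c·|I|, 0) = max(m − (r/B)·|I|, 0). That is, the constant assignment matrix simultaneously preserves the map-phase computational delay and the communication load of the unpartitioned scheme. -/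
lemma aux_choose (K t : ℕ) (ht : 1 ≤ t) : ∀ q, q ≤ K →
    (K - q).choose t * K ≤ K.choose t * (K - q) := by
  intro q
  induction q with
  | zero => intro _; simp [Nat.mul_comm]
  | succ q ih =>
    intro hq
    have ih' := ih (Nat.le_of_succ_le hq)
    set n := K - q with hn
    have hn1 : 1 ≤ n := by omega
    have hKsq : K - (q + 1) = n - 1 := by omega
    rw [hKsq]
    have hid : (n - 1).choose t * n = n.choose t * (n - t) := by
      have := Nat.choose_mul_succ_eq (n - 1) t
      simpa [Nat.sub_add_cancel hn1] using this
    have h1 : (n - 1).choose t * n ≤ n.choose t * (n - 1) :=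
      hid ▸ Nat.mul_le_mul_left _ (by omega)
    have key : (n - 1).choose t * K * n ≤ K.choose t * (n - 1) * n := by
      calc (n - 1).choose t * K * n = (n - 1).choose t * n * K := by ring
        _ ≤ n.choose t * (n - 1) * K := Nat.mul_le_mul_right _ h1
        _ = n.choose t * K * (n - 1) := by ring
        _ ≤ K.choose t * n * (n - 1) := Nat.mul_le_mul_right _ ih'
        _ = K.choose t * (n - 1) * n := by ring
    exact Nat.le_of_mul_le_mul_right key (by omega)

/-- The constant assignment matrix with entry `c = (r/B)/T` simultaneously
preserves the map-phase computational delay and the communication load of the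
unpartitioned scheme: (i) any `q` servers collectively store at least `m/T`
coded rows of every partition, and (ii) a server holding the contents of a
collection `I` of batches needs exactly as many further intermediate values as
in the unpartitioned scheme. -/
theorem constant_assignment_preserves_delay_and_load
    (K t q m r T : ℕ)
    (hK : 0 < K) (ht : 0 < t) (hq : 0 < q) (hm : 0 < m) (hr : 0 < r) (hT : 0 < T)
    (htq : t ≤ q) (hqK : q ≤ K)
    (hqr : q * r = K * m)
    (hB : K.choose t ∣ r)
    (hTm : T ∣ m) (hTrB : T ∣ r / K.choose t)
    (c : ℕ) (hc : c = (r / K.choose t) / T) :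
    (∀ Q ∈ Finset.powersetCard q (Finset.univ : Finset (Fin K)),
      ∀ j ∈ Finset.Icc 1 T,
        m / T ≤
          ∑ 𝒯 ∈ (Finset.powersetCard t (Finset.univ : Finset (Fin K))).filter
            (fun 𝒯 => (𝒯 ∩ Q).Nonempty), c) ∧
    (∀ I : Finset (Finset (Fin K)),
      I ⊆ Finset.powersetCard t (Finset.univ : Finset (Fin K)) →
        ∑ j ∈ Finset.Icc 1 T, max (m / T - c * I.card) 0 =
          max (m - (r / K.choose t) * I.card) 0) := by
  set B := K.choose t with hBdef
  have hBpos : 0 < B := Nat.choose_pos (le_trans htq hqK)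
  have hrB : r = B * (r / B) := (Nat.mul_div_cancel' hB).symm
  have hcT : r / B = T * c := by
    rw [hc]; exact (Nat.mul_div_cancel' hTrB).symm
  set m' := m / T with hm'def
  have hmT : m = T * m' := (Nat.mul_div_cancel' hTm).symm
  -- key relation : q * B * c = K * m'
  have hkey : q * (B * c) = K * m' := by
    have : q * (B * (T * c)) = K * (T * m') := by
      rw [← hcT, ← hrB, ← hmT]; exact hqr
    have h2 : T * (q * (B * c)) = T * (K * m') := by ring_nf; ring_nf at this; linarith
    exact Nat.eq_of_mul_eq_mul_left hT h2
  constructor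
  · intro Q hQ j hj
    rw [Finset.mem_powersetCard] at hQ
    obtain ⟨-, hQcard⟩ := hQ
    rw [Finset.sum_const, smul_eq_mul]
    -- compute the card of the filtered set
    have hcompl : ((Finset.powersetCard t (Finset.univ : Finset (Fin K))).filter
        (fun 𝒯 => ¬ (𝒯 ∩ Q).Nonempty)) = Finset.powersetCard t Qᶜ := by
      ext 𝒯
      simp only [Finset.mem_filter, Finset.mem_powersetCard, Finset.not_nonempty_iff_eq_empty,
        Finset.subset_univ, true_and]
      constructor
      · rintro ⟨hcard, hempty⟩
        refine ⟨fun a ha => Finset.mem_compl.2 fun haQ => ?_, hcard⟩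
        exact Finset.notMem_empty a (hempty ▸ Finset.mem_inter.2 ⟨ha, haQ⟩)
      · rintro ⟨hsub, hcard⟩
        refine ⟨hcard, Finset.eq_empty_of_forall_notMem fun a ha => ?_⟩
        rw [Finset.mem_inter] at ha
        exact (Finset.mem_compl.1 (hsub ha.1)) ha.2
    have hQc : (Qᶜ : Finset (Fin K)).card = K - q := by
      rw [Finset.card_compl, hQcard, Fintype.card_fin]
    have hcardF : ((Finset.powersetCard t (Finset.univ : Finset (Fin K))).filter
        (fun 𝒯 => (𝒯 ∩ Q).Nonempty)).card = B - (K - q).choose t := by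
      have := Finset.card_filter_add_card_filter_not
        (s := Finset.powersetCard t (Finset.univ : Finset (Fin K)))
        (p := fun 𝒯 => (𝒯 ∩ Q).Nonempty)
      rw [hcompl, Finset.card_powersetCard, hQc] at this
      have huniv : (Finset.powersetCard t (Finset.univ : Finset (Fin K))).card = B := by
        rw [Finset.card_powersetCard, Finset.card_univ, Fintype.card_fin]
      omega
    rw [hcardF]
    -- main inequality
    have hch := aux_choose K t ht q hqK
    have hle : (K - q).choose t ≤ B := Nat.choose_le_choose t (Nat.sub_le K q)
    have hKineq : q * B ≤ K * (B - (K - q).choose t) := by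
      have hqBKB : q * B ≤ K * B := Nat.mul_le_mul_right B hqK
      have h2 : K * (K - q).choose t ≤ K * B - q * B := by
        calc K * (K - q).choose t = (K - q).choose t * K := Nat.mul_comm _ _
          _ ≤ K.choose t * (K - q) := hch
          _ = B * K - B * q := by rw [← hBdef, Nat.mul_sub]
          _ = K * B - q * B := by rw [Nat.mul_comm B K, Nat.mul_comm B q]
      have h4 : K * (B - (K - q).choose t) = K * B - K * (K - q).choose t := by
        rw [Nat.mul_sub]
      omega
    -- m' ≤ (B - (K-q).choose t) * c  :  multiply by K
    have hmul : K * m' ≤ K * ((B - (K - q).choose t) * c) := by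
      calc K * m' = q * (B * c) := hkey.symm
        _ = q * B * c := by ring
        _ ≤ K * (B - (K - q).choose t) * c := Nat.mul_le_mul_right _ hKineq
        _ = K * ((B - (K - q).choose t) * c) := by ring
    exact Nat.le_of_mul_le_mul_left hmul hK
  · intro I hI
    rw [Finset.sum_const, Nat.card_Icc]
    simp only [Nat.add_sub_cancel, smul_eq_mul, Nat.max_eq_left (Nat.zero_le _)]
    rw [hcT]
    calc T * (m' - c * I.card) = T * m' - T * (c * I.card) := by rw [Nat.mul_sub]
      _ = m - T * c * I.card := by rw [← hmT, ← Nat.mul_assoc]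
end
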